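/- Let ≿ be a complete transitive relation on a compact convex X satisfying continuity and betweenness, with best and worst elements x* ≻ x_*. Define U : X → [0,1] by the unique t with x ∼ m_t where m_t = t x* + (1−t) x_*. Then U represents ≿: x ≿ y if and only if U(x) ≥ U(y). -/

import Mathlib

open Set

theorem calibration_represents
    {E : Type*} [AddCommGroup E] [Module ℝ E] [TopologicalSpace E]
    [IsTopologicalAddGroup E] [ContinuousSMul ℝ E] [T2Space E]
    (X : Set E) (hXconv : Convex ℝ X) (hXcomp : IsCompact X)
    (r : E → E → Prop)
    (hcomp : ∀ x ∈ X, ∀ y ∈ X, r x y ∨ r y x)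
    (htrans : ∀ x ∈ X, ∀ y ∈ X, ∀ z ∈ X, r x y → r y z → r x z)
    (hclosed : ∀ y ∈ X, IsClosed {x ∈ X | r x y} ∧ IsClosed {x ∈ X | r y x})
    (hbet : ∀ x ∈ X, ∀ y ∈ X, ∀ l ∈ Ioo (0:ℝ) 1,
      (r x y ∧ ¬ r y x) →
        ((r x (l • x + (1 - l) • y) ∧ ¬ r (l • x + (1 - l) • y) x) ∧
         (r (l • x + (1 - l) • y) y ∧ ¬ r y (l • x + (1 - l) • y))))
    (xstar xlow : E) (hxstar : xstar ∈ X) (hxlow : xlow ∈ X)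
    (hbest : ∀ x ∈ X, r xstar x) (hworst : ∀ x ∈ X, r x xlow)
    (hstrict : r xstar xlow ∧ ¬ r xlow xstar)
    (U : E → ℝ)
    (hU : ∀ x ∈ X, U x ∈ Icc (0:ℝ) 1 ∧
      (r x (U x • xstar + (1 - U x) • xlow) ∧ r (U x • xstar + (1 - U x) • xlow) x)) :
    ∀ x ∈ X, ∀ y ∈ X, (r x y ↔ U x ≥ U y) := by
  set m : ℝ → E := fun t => t • xstar + (1 - t) • xlow with hm
  have hmX : ∀ t ∈ Icc (0:ℝ) 1, m t ∈ X := by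
    intro t ht
    exact hXconv hxstar hxlow ht.1 (by linarith [ht.2]) (by ring)
  -- m s ≻ xlow for s > 0
  have hlow : ∀ s ∈ Icc (0:ℝ) 1, 0 < s → (r (m s) xlow ∧ ¬ r xlow (m s)) := by
    intro s hs hs0
    rcases eq_or_lt_of_le hs.2 with h1 | h1
    · have : m s = xstar := by rw [hm]; simp [h1]
      rw [this]; exact hstrict
    · exact (hbet xstar hxstar xlow hxlow s ⟨hs0, h1⟩ hstrict).2
  -- strict monotonicity
  have hmono : ∀ s ∈ Icc (0:ℝ) 1, ∀ t ∈ Icc (0:ℝ) 1, t < s →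
      (r (m s) (m t) ∧ ¬ r (m t) (m s)) := by
    intro s hs t ht hts
    have hs0 : 0 < s := lt_of_le_of_lt ht.1 hts
    rcases eq_or_lt_of_le ht.1 with h0 | h0
    · have : m t = xlow := by rw [hm]; simp [← h0]
      rw [this]; exact hlow s hs hs0
    · have hl : t / s ∈ Ioo (0:ℝ) 1 :=
        ⟨div_pos h0 hs0, (div_lt_one hs0).2 hts⟩
      have key := hbet (m s) (hmX s hs) xlow hxlow (t / s) hl (hlow s hs hs0)
      have heq : (t / s) • m s + (1 - t / s) • xlow = m t := by
        rw [hm]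
        match_scalars <;> field_simp <;> ring
      rw [heq] at key
      exact key.1
  intro x hx y hy
  obtain ⟨hUx, hx1, hx2⟩ := hU x hx
  obtain ⟨hUy, hy1, hy2⟩ := hU y hy
  have hmx : m (U x) ∈ X := hmX _ hUx
  have hmy : m (U y) ∈ X := hmX _ hUy
  constructor
  · intro hxy
    by_contra h
    push_neg at h
    have hst := hmono (U y) hUy (U x) hUx h
    have : r (m (U x)) (m (U y)) := by
      have h1 : r (m (U x)) y := htrans _ hmx _ hx _ hy hx2 hxy
      exact htrans _ hmx _ hy _ hmy h1 hy1
    exact hst.2 this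
  · intro h
    rcases eq_or_lt_of_le h with heq | hlt
    · have : m (U x) = m (U y) := by rw [hm]; simp [heq]
      have h1 : r x (m (U y)) := this ▸ hx1
      exact htrans _ hx _ hmy _ hy h1 hy2
    · have hst := hmono (U x) hUx (U y) hUy hlt
      have h1 : r x (m (U y)) := htrans _ hx _ hmx _ hmy hx1 hst.1
      exact htrans _ hx _ hmy _ hy h1 hy2
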